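/- If v is a cancelable valuation function, then for any sets S, T ⊆ M and any R ⊆ M \ (S ∪ T), v(S) ≥ v(T) implies v(S ∪ R) ≥ v(T ∪ R). -/
import Mathlib

/-- A valuation `v` on subsets of the goods is *cancelable* if
`v (S ∪ {g}) > v (T ∪ {g})` implies `v S > v T` for every `g ∉ S ∪ T`. -/
def Cancelable {G : Type*} [DecidableEq G] (v : Finset G → ℝ) : Prop :=
  ∀ S T : Finset G, ∀ g, g ∉ S ∪ T → v (insert g S) > v (insert g T) → v S > v T

/-- If `v` is cancelable, then for any sets `S, T` and any `R` disjoint from `S ∪ T`,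
`v S ≥ v T` implies `v (S ∪ R) ≥ v (T ∪ R)`. -/
theorem cancelable_union_ge {G : Type*} [DecidableEq G] (v : Finset G → ℝ)
    (hnn : ∀ S, 0 ≤ v S) (hc : Cancelable v)
    (S T R : Finset G) (hR : ∀ g ∈ R, g ∉ S ∪ T) :
    v S ≥ v T → v (S ∪ R) ≥ v (T ∪ R) := by
  induction R using Finset.induction_on with
  | empty => simpa using id
  | @insert a R' ha ih =>
    intro h
    have hih := ih (fun g hg => hR g (Finset.mem_insert_of_mem hg)) h
    have haST := hR a (Finset.mem_insert_self a R')
    have hnot : a ∉ (T ∪ R') ∪ (S ∪ R') := by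
      simp only [Finset.mem_union] at *
      tauto
    have := hc (T ∪ R') (S ∪ R') a hnot
    rw [Finset.union_insert, Finset.union_insert]
    by_contra hlt
    push_neg at hlt
    exact absurd (this hlt) (not_lt.mpr hih)
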